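/- For any n×n complex matrix A, the k-numerical radius w_k(A) equals the maximum over θ ∈ [0,2π) of half the sum of the k largest eigenvalues of e^{iθ}A + e^{-iθ}A*. -/

import Mathlib

open Matrix

/-- `P` is an orthogonal projection of rank `k`. -/
def IsProjOfRank {m : Type*} [Fintype m] [DecidableEq m]
    (P : Matrix m m ℂ) (k : ℕ) : Prop :=
  P * P = P ∧ Pᴴ = P ∧ P.rank = k

/-- The `k`-numerical range `W_k(A) = { tr (A P) : P an orthogonal projection of rank k }`. -/
def WK {m : Type*} [Fintype m] [DecidableEq m] (k : ℕ) (A : Matrix m m ℂ) : Set ℂ :=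
  {z | ∃ P : Matrix m m ℂ, IsProjOfRank P k ∧ z = (A * P).trace}

/-- The `k`-numerical radius `w_k(A) = max { |tr (A P)| : P a rank-k orthogonal projection }`. -/
noncomputable def wk {m : Type*} [Fintype m] [DecidableEq m] (k : ℕ) (A : Matrix m m ℂ) : ℝ :=
  sSup {r : ℝ | ∃ P : Matrix m m ℂ, IsProjOfRank P k ∧ r = ‖(A * P).trace‖}

/-- `A` and `B` are parallel with respect to the `k`-numerical radius. -/
noncomputable def ParallelWk {m : Type*} [Fintype m] [DecidableEq m]
    (k : ℕ) (A B : Matrix m m ℂ) : Prop :=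
  ∃ μ : ℂ, ‖μ‖ = 1 ∧ wk k (A + μ • B) = wk k A + wk k B

/-- Sum of the `k` largest eigenvalues of a Hermitian matrix (`0` if not Hermitian). -/
noncomputable def sumKLargest {m : Type*} [Fintype m] [DecidableEq m]
    (k : ℕ) (A : Matrix m m ℂ) : ℝ :=
  if h : A.IsHermitian then
    sSup {r : ℝ | ∃ s : Finset m, s.card = k ∧ r = ∑ i ∈ s, h.eigenvalues i}
  else 0

/-- Sum of the `k` smallest eigenvalues of a Hermitian matrix (`0` if not Hermitian). -/
noncomputable def sumKSmallest {m : Type*} [Fintype m] [DecidableEq m]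
    (k : ℕ) (A : Matrix m m ℂ) : ℝ :=
  if h : A.IsHermitian then
    sInf {r : ℝ | ∃ s : Finset m, s.card = k ∧ r = ∑ i ∈ s, h.eigenvalues i}
  else 0




/-- diagonal entries of a projection written as sums of squared norms -/
lemma proj_diag_eq (P : Matrix (Fin n) (Fin n) ℂ) (h1 : P * P = P) (h2 : Pᴴ = P) (i : Fin n) :
    P i i = ((∑ j, Complex.normSq (P i j) : ℝ) : ℂ) := by
  conv_lhs => rw [← h1]
  rw [mul_apply]
  push_cast
  refine Finset.sum_congr rfl fun j _ => ?_
  have : P j i = (starRingEnd ℂ) (P i j) := by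
    conv_lhs => rw [← h2]
    rfl
  rw [this, Complex.mul_conj]

lemma proj_diag_re_nonneg (P : Matrix (Fin n) (Fin n) ℂ) (h1 : P * P = P) (h2 : Pᴴ = P)
    (i : Fin n) : 0 ≤ (P i i).re := by
  rw [proj_diag_eq P h1 h2 i]
  simp only [Complex.ofReal_re]
  exact Finset.sum_nonneg fun j _ => Complex.normSq_nonneg _

lemma proj_diag_re_le_one (P : Matrix (Fin n) (Fin n) ℂ) (h1 : P * P = P) (h2 : Pᴴ = P)
    (i : Fin n) : (P i i).re ≤ 1 := by
  have key := proj_diag_eq P h1 h2 i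
  have h0 : (P i i).im = 0 := by rw [key]; simp
  have hs : Complex.normSq (P i i) ≤ (P i i).re := by
    conv_rhs => rw [key]
    simp only [Complex.ofReal_re]
    exact Finset.single_le_sum (f := fun j => Complex.normSq (P i j))
      (fun j _ => Complex.normSq_nonneg _) (Finset.mem_univ i)
  have : (P i i).re * (P i i).re ≤ (P i i).re := by
    rw [Complex.normSq_apply, h0] at hs; nlinarith
  nlinarith [proj_diag_re_nonneg P h1 h2 i]

lemma proj_entry_abs_le_one (P : Matrix (Fin n) (Fin n) ℂ) (h1 : P * P = P) (h2 : Pᴴ = P)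
    (i j : Fin n) : ‖P i j‖ ≤ 1 := by
  have key := proj_diag_eq P h1 h2 i
  have hs : Complex.normSq (P i j) ≤ (P i i).re := by
    conv_rhs => rw [key]
    simp only [Complex.ofReal_re]
    exact Finset.single_le_sum (f := fun j => Complex.normSq (P i j))
      (fun j _ => Complex.normSq_nonneg _) (Finset.mem_univ j)
  have h1' := proj_diag_re_le_one P h1 h2 i
  rw [← Complex.sq_norm] at hs
  nlinarith [norm_nonneg (P i j)]




lemma unitary_star_mul (U : Matrix.unitaryGroup (Fin n) ℂ) :
    (star U : Matrix (Fin n) (Fin n) ℂ) * (U : Matrix (Fin n) (Fin n) ℂ) = 1 :=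
  Unitary.coe_star_mul_self U

lemma unitary_mul_star (U : Matrix.unitaryGroup (Fin n) ℂ) :
    (U : Matrix (Fin n) (Fin n) ℂ) * (star U : Matrix (Fin n) (Fin n) ℂ) = 1 :=
  Unitary.coe_mul_star_self U

/-- For a unitary U and any B, trace (U * B * star U) = trace B. -/
lemma trace_unitary_conj (U : Matrix.unitaryGroup (Fin n) ℂ) (B : Matrix (Fin n) (Fin n) ℂ) :
    ((U : Matrix (Fin n) (Fin n) ℂ) * B * (star U : Matrix (Fin n) (Fin n) ℂ)).trace = B.trace := by
  rw [trace_mul_cycle, unitary_star_mul, Matrix.one_mul]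

lemma isUnit_unitary (U : Matrix.unitaryGroup (Fin n) ℂ) :
    IsUnit (U : Matrix (Fin n) (Fin n) ℂ) :=
  ⟨Unitary.toUnits U, rfl⟩

lemma isUnit_star_unitary (U : Matrix.unitaryGroup (Fin n) ℂ) :
    IsUnit (star U : Matrix (Fin n) (Fin n) ℂ) :=
  (isUnit_unitary U).star

lemma rank_unitary_conj (U : Matrix.unitaryGroup (Fin n) ℂ) (B : Matrix (Fin n) (Fin n) ℂ) :
    ((U : Matrix (Fin n) (Fin n) ℂ) * B * (star U : Matrix (Fin n) (Fin n) ℂ)).rank = B.rank := by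
  rw [rank_mul_eq_left_of_isUnit_det _ _ ((isUnit_iff_isUnit_det _).mp (isUnit_star_unitary U)),
    rank_mul_eq_right_of_isUnit_det _ _ ((isUnit_iff_isUnit_det _).mp (isUnit_unitary U))]

/-- Eigenvalues of a Hermitian projection are 0 or 1. -/
lemma proj_eigs (P : Matrix (Fin n) (Fin n) ℂ) (h1 : P * P = P) (hP : P.IsHermitian) (i : Fin n) :
    hP.eigenvalues i = 0 ∨ hP.eigenvalues i = 1 := by
  set U := hP.eigenvectorUnitary with hU
  set d : Fin n → ℂ := RCLike.ofReal ∘ hP.eigenvalues with hd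
  have hdiag : (star U : Matrix (Fin n) (Fin n) ℂ) * P * (U : Matrix (Fin n) (Fin n) ℂ)
      = diagonal d := by rw [hU, hd]; simpa using hP.conjStarAlgAut_star_eigenvectorUnitary
  have hDD : diagonal d * diagonal d = diagonal d := by
    rw [← hdiag]
    calc (star U : Matrix (Fin n) (Fin n) ℂ) * P * (U : Matrix (Fin n) (Fin n) ℂ) *
          ((star U : Matrix (Fin n) (Fin n) ℂ) * P * (U : Matrix (Fin n) (Fin n) ℂ))
        = (star U : Matrix (Fin n) (Fin n) ℂ) * (P * ((U : Matrix (Fin n) (Fin n) ℂ) *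
            (star U : Matrix (Fin n) (Fin n) ℂ)) * P) * (U : Matrix (Fin n) (Fin n) ℂ) := by
          simp only [Matrix.mul_assoc]
      _ = (star U : Matrix (Fin n) (Fin n) ℂ) * P * (U : Matrix (Fin n) (Fin n) ℂ) := by
          rw [unitary_mul_star, Matrix.mul_one, h1]
  rw [diagonal_mul_diagonal] at hDD
  have h2 := congrArg (fun M => M i i) hDD
  simp only [diagonal_apply_eq, Pi.mul_apply] at h2
  have h3 : (hP.eigenvalues i : ℝ) * hP.eigenvalues i = hP.eigenvalues i := by
    have : (hP.eigenvalues i : ℂ) * (hP.eigenvalues i : ℂ) = (hP.eigenvalues i : ℂ) := h2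
    exact_mod_cast this
  have h4 : hP.eigenvalues i * (hP.eigenvalues i - 1) = 0 := by ring_nf; linarith
  rcases mul_eq_zero.mp h4 with h | h
  · exact Or.inl h
  · exact Or.inr (by linarith)

/-- Trace of a Hermitian projection equals its rank. -/
lemma trace_proj (P : Matrix (Fin n) (Fin n) ℂ) (h1 : P * P = P) (h2 : Pᴴ = P) :
    P.trace = (P.rank : ℂ) := by
  have hP : P.IsHermitian := h2
  have htr : P.trace = ∑ i, (hP.eigenvalues i : ℂ) := by
    conv_lhs => rw [hP.spectral_theorem, Unitary.conjStarAlgAut_apply]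
    rw [trace_unitary_conj hP.eigenvectorUnitary, trace_diagonal]
    rfl
  have hrk : P.rank = Fintype.card {i // hP.eigenvalues i ≠ 0} := hP.rank_eq_card_non_zero_eigs
  rw [htr, hrk, Fintype.card_subtype]
  rw [← Finset.sum_filter_add_sum_filter_not Finset.univ (fun i => hP.eigenvalues i ≠ 0)
    (fun i => (hP.eigenvalues i : ℂ))]
  have hzero : ∑ i ∈ Finset.univ.filter (fun i => ¬ hP.eigenvalues i ≠ 0),
      (hP.eigenvalues i : ℂ) = 0 := by
    refine Finset.sum_eq_zero fun i hi => ?_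
    simp only [Finset.mem_filter, not_not] at hi
    rw [hi.2]; simp
  rw [hzero, add_zero, Finset.card_eq_sum_ones]
  push_cast
  refine Finset.sum_congr rfl fun i hi => ?_
  simp only [Finset.mem_filter] at hi
  rcases proj_eigs P h1 hP i with h | h
  · exact absurd h hi.2
  · rw [h]; simp




/-- the finite set of k-subset sums; its max characterization -/
lemma subset_sums_spec (lam : Fin n → ℝ) (k : ℕ) (hkn : k ≤ n) :
    ∃ s : Finset (Fin n), s.card = k ∧
      (∀ s' : Finset (Fin n), s'.card = k → ∑ i ∈ s', lam i ≤ ∑ i ∈ s, lam i) ∧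
      sSup {r : ℝ | ∃ s' : Finset (Fin n), s'.card = k ∧ r = ∑ i ∈ s', lam i} = ∑ i ∈ s, lam i := by
  have hne : (Finset.univ.powersetCard k : Finset (Finset (Fin n))).Nonempty := by
    obtain ⟨t, _, ht⟩ := Finset.exists_subset_card_eq (s := (Finset.univ : Finset (Fin n))) (n := k)
      (by simpa using hkn)
    exact ⟨t, Finset.mem_powersetCard_univ.mpr ht⟩
  obtain ⟨s, hs, hmax⟩ := Finset.exists_max_image (Finset.univ.powersetCard k)
    (fun s' => ∑ i ∈ s', lam i) hne
  rw [Finset.mem_powersetCard_univ] at hs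
  refine ⟨s, hs, fun s' hs' => hmax s' (Finset.mem_powersetCard_univ.mpr hs'), ?_⟩
  have hset : {r : ℝ | ∃ s' : Finset (Fin n), s'.card = k ∧ r = ∑ i ∈ s', lam i}
      = ↑((Finset.univ.powersetCard k).image (fun s' => ∑ i ∈ s', lam i)) := by
    ext r
    simp only [Set.mem_setOf_eq, Finset.coe_image, Set.mem_image, Finset.mem_coe,
      Finset.mem_powersetCard_univ]
    constructor
    · rintro ⟨s', h1, h2⟩; exact ⟨s', h1, h2.symm⟩
    · rintro ⟨s', h1, h2⟩; exact ⟨s', h1, h2.symm⟩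
  rw [hset]
  have hne2 : ((Finset.univ.powersetCard k).image (fun s' => ∑ i ∈ s', lam i)).Nonempty :=
    hne.image _
  rw [Finset.Nonempty.csSup_eq_max' hne2]
  apply le_antisymm
  · apply Finset.max'_le
    intro r hr
    obtain ⟨s', hs', rfl⟩ := Finset.mem_image.mp hr
    exact hmax s' hs'
  · apply Finset.le_max'
    exact Finset.mem_image.mpr ⟨s, Finset.mem_powersetCard_univ.mpr hs, rfl⟩

/-- convexity/exchange lemma: ∑ lam t ≤ top-k sum when 0 ≤ t ≤ 1, ∑ t = k -/
lemma sum_mul_le_topk (lam t : Fin n → ℝ) (k : ℕ) (hk : 1 ≤ k)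
    (ht0 : ∀ i, 0 ≤ t i) (ht1 : ∀ i, t i ≤ 1) (hsum : ∑ i, t i = k)
    (s : Finset (Fin n)) (hs : s.card = k)
    (hmax : ∀ s' : Finset (Fin n), s'.card = k → ∑ i ∈ s', lam i ≤ ∑ i ∈ s, lam i) :
    ∑ i, lam i * t i ≤ ∑ i ∈ s, lam i := by
  have hsne : s.Nonempty := Finset.card_pos.mp (by omega)
  obtain ⟨i₀, hi₀, hmin⟩ := Finset.exists_min_image s lam hsne
  set c := lam i₀ with hc
  have houts : ∀ j, j ∉ s → lam j ≤ c := by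
    intro j hj
    by_contra hlt
    push_neg at hlt
    have hj' : j ∉ s.erase i₀ := fun h => hj (Finset.mem_of_mem_erase h)
    have hcard : (insert j (s.erase i₀)).card = k := by
      rw [Finset.card_insert_of_notMem hj', Finset.card_erase_of_mem hi₀, hs]
      omega
    have hsum' : ∑ i ∈ insert j (s.erase i₀), lam i = lam j + (∑ i ∈ s, lam i - c) := by
      rw [Finset.sum_insert hj', Finset.sum_erase_eq_sub hi₀]
    have := hmax _ hcard
    rw [hsum'] at this
    linarith
  have key : ∀ i, lam i * t i ≤ (if i ∈ s then lam i - c else 0) + c * t i := by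
    intro i
    by_cases hi : i ∈ s
    · simp only [hi, if_true]
      have h1 : c ≤ lam i := hmin i hi
      nlinarith [ht0 i, ht1 i]
    · simp only [hi, if_false]
      have h1 : lam i ≤ c := houts i hi
      nlinarith [ht0 i]
  calc ∑ i, lam i * t i ≤ ∑ i, ((if i ∈ s then lam i - c else 0) + c * t i) :=
        Finset.sum_le_sum fun i _ => key i
    _ = (∑ i ∈ s, (lam i - c)) + c * ∑ i, t i := by
        rw [Finset.sum_add_distrib, ← Finset.mul_sum, Finset.sum_ite_mem,
          Finset.univ_inter]
    _ = (∑ i ∈ s, lam i) - c * k + c * k := by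
        rw [hsum, Finset.sum_sub_distrib, Finset.sum_const, hs]
        push_cast
        ring
    _ = ∑ i ∈ s, lam i := by ring


variable {n : ℕ}

lemma kyfan_le (H P : Matrix (Fin n) (Fin n) ℂ) (hH : H.IsHermitian) (k : ℕ)
    (hk : 1 ≤ k) (hkn : k ≤ n) (hP : IsProjOfRank P k) :
    ((H * P).trace).re ≤ sumKLargest k H := by
  obtain ⟨hP1, hP2, hP3⟩ := hP
  set U := hH.eigenvectorUnitary with hUdef
  set lam := hH.eigenvalues with hlam
  set Q : Matrix (Fin n) (Fin n) ℂ :=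
    (star U : Matrix (Fin n) (Fin n) ℂ) * P * (U : Matrix (Fin n) (Fin n) ℂ) with hQ
  have hQ1 : Q * Q = Q := by
    rw [hQ]
    calc (star U : Matrix (Fin n) (Fin n) ℂ) * P * (U : Matrix (Fin n) (Fin n) ℂ) *
          ((star U : Matrix (Fin n) (Fin n) ℂ) * P * (U : Matrix (Fin n) (Fin n) ℂ))
        = (star U : Matrix (Fin n) (Fin n) ℂ) * (P * ((U : Matrix (Fin n) (Fin n) ℂ) *
            (star U : Matrix (Fin n) (Fin n) ℂ)) * P) * (U : Matrix (Fin n) (Fin n) ℂ) := by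
          simp only [Matrix.mul_assoc]
      _ = _ := by rw [unitary_mul_star, Matrix.mul_one, hP1]
  have hQ2 : Qᴴ = Q := by
    rw [hQ, conjTranspose_mul, conjTranspose_mul, hP2, ← star_eq_conjTranspose,
      ← star_eq_conjTranspose, star_star]
    rw [Matrix.mul_assoc, ← Matrix.mul_assoc (star (U : Matrix (Fin n) (Fin n) ℂ))]
  have hQtr : Q.trace = (k : ℂ) := by
    rw [hQ, trace_mul_cycle, unitary_mul_star, Matrix.one_mul,
      trace_proj P hP1 hP2, hP3]
  -- trace (H * P) = ∑ lam i * Q i i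
  have hdm : ∀ (d : Fin n → ℂ) (M : Matrix (Fin n) (Fin n) ℂ),
      (diagonal d * M).trace = ∑ i, d i * M i i := by
    intro d M
    simp [Matrix.trace, Matrix.diag_apply, Matrix.diagonal_mul]
  have htr : (H * P).trace = ∑ i, (lam i : ℂ) * Q i i := by
    conv_lhs => rw [hH.spectral_theorem, Unitary.conjStarAlgAut_apply]
    simp only [Matrix.mul_assoc]
    rw [trace_mul_comm]
    rw [Matrix.mul_assoc, ← hQ, hdm]
    rfl
  set t : Fin n → ℝ := fun i => (Q i i).re with ht
  have htre : ((H * P).trace).re = ∑ i, lam i * t i := by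
    rw [htr]
    rw [Complex.re_sum]
    refine Finset.sum_congr rfl fun i _ => ?_
    exact Complex.re_ofReal_mul _ _
  have hsumt : ∑ i, t i = (k : ℝ) := by
    have : (Q.trace).re = (k : ℝ) := by rw [hQtr]; simp
    rw [← this, Matrix.trace, Complex.re_sum]
    rfl
  obtain ⟨s, hs, hmax, hsup⟩ := subset_sums_spec lam k hkn
  have hle := sum_mul_le_topk lam t k hk
    (fun i => proj_diag_re_nonneg Q hQ1 hQ2 i)
    (fun i => proj_diag_re_le_one Q hQ1 hQ2 i) hsumt s hs hmax
  rw [htre]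
  rw [sumKLargest, dif_pos hH]
  rw [hsup]
  exact hle

lemma proj_construct (U : Matrix.unitaryGroup (Fin n) ℂ) (s : Finset (Fin n)) (k : ℕ)
    (hs : s.card = k) :
    IsProjOfRank ((U : Matrix (Fin n) (Fin n) ℂ) *
      diagonal (fun i => if i ∈ s then (1:ℂ) else 0) * (star U : Matrix (Fin n) (Fin n) ℂ)) k := by
  set D : Matrix (Fin n) (Fin n) ℂ := diagonal (fun i => if i ∈ s then (1:ℂ) else 0) with hD
  have hDD : D * D = D := by
    rw [hD, diagonal_mul_diagonal]
    refine congrArg diagonal (funext fun i => ?_)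
    by_cases hi : i ∈ s <;> simp [hi]
  have hDH : Dᴴ = D := by
    rw [hD, diagonal_conjTranspose]
    refine congrArg diagonal (funext fun i => ?_)
    by_cases hi : i ∈ s <;> simp [Pi.star_apply, hi]
  refine ⟨?_, ?_, ?_⟩
  · calc (U : Matrix (Fin n) (Fin n) ℂ) * D * (star U : Matrix (Fin n) (Fin n) ℂ) *
          ((U : Matrix (Fin n) (Fin n) ℂ) * D * (star U : Matrix (Fin n) (Fin n) ℂ))
        = (U : Matrix (Fin n) (Fin n) ℂ) * (D * ((star U : Matrix (Fin n) (Fin n) ℂ) *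
            (U : Matrix (Fin n) (Fin n) ℂ)) * D) * (star U : Matrix (Fin n) (Fin n) ℂ) := by
          simp only [Matrix.mul_assoc]
      _ = _ := by rw [unitary_star_mul, Matrix.mul_one, hDD]
  · rw [conjTranspose_mul, conjTranspose_mul, hDH, ← star_eq_conjTranspose,
      ← star_eq_conjTranspose, star_star, Matrix.mul_assoc,
      ← Matrix.mul_assoc (U : Matrix (Fin n) (Fin n) ℂ)]
  · rw [rank_unitary_conj U D, hD, rank_diagonal]
    rw [← hs]
    rw [Fintype.card_subtype]
    congr 1
    ext i
    simp only [Finset.mem_filter, Finset.mem_univ, true_and]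
    by_cases hi : i ∈ s <;> simp [hi]

lemma kyfan_ex (H : Matrix (Fin n) (Fin n) ℂ) (hH : H.IsHermitian) (k : ℕ)
    (hkn : k ≤ n) :
    ∃ P : Matrix (Fin n) (Fin n) ℂ, IsProjOfRank P k ∧
      (H * P).trace = ((sumKLargest k H : ℝ) : ℂ) := by
  obtain ⟨s, hs, hmax, hsup⟩ := subset_sums_spec hH.eigenvalues k hkn
  set U := hH.eigenvectorUnitary with hUdef
  set D : Matrix (Fin n) (Fin n) ℂ := diagonal (fun i => if i ∈ s then (1:ℂ) else 0) with hD
  refine ⟨(U : Matrix (Fin n) (Fin n) ℂ) * D * (star U : Matrix (Fin n) (Fin n) ℂ),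
    proj_construct U s k hs, ?_⟩
  conv_lhs => rw [hH.spectral_theorem, Unitary.conjStarAlgAut_apply]
  have key : (U : Matrix (Fin n) (Fin n) ℂ) * diagonal (RCLike.ofReal ∘ hH.eigenvalues) *
        (star U : Matrix (Fin n) (Fin n) ℂ) *
        ((U : Matrix (Fin n) (Fin n) ℂ) * D * (star U : Matrix (Fin n) (Fin n) ℂ))
      = (U : Matrix (Fin n) (Fin n) ℂ) * (diagonal (RCLike.ofReal ∘ hH.eigenvalues) * D) *
        (star U : Matrix (Fin n) (Fin n) ℂ) := by
    calc _ = (U : Matrix (Fin n) (Fin n) ℂ) * (diagonal (RCLike.ofReal ∘ hH.eigenvalues) *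
          ((star U : Matrix (Fin n) (Fin n) ℂ) * (U : Matrix (Fin n) (Fin n) ℂ)) * D) *
          (star U : Matrix (Fin n) (Fin n) ℂ) := by simp only [Matrix.mul_assoc]
      _ = _ := by rw [unitary_star_mul, Matrix.mul_one]
  rw [key, trace_unitary_conj, hD, diagonal_mul_diagonal, trace_diagonal]
  rw [sumKLargest, dif_pos hH, hsup]
  simp only [Function.comp_apply, mul_ite, mul_one, mul_zero]
  rw [Finset.sum_ite_mem, Finset.univ_inter]
  norm_cast

lemma Htheta_herm (A : Matrix (Fin n) (Fin n) ℂ) (θ : ℝ) :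
    (Complex.exp (θ * Complex.I) • A + Complex.exp (-(θ * Complex.I)) • Aᴴ).IsHermitian := by
  have hstar : star (Complex.exp (θ * Complex.I)) = Complex.exp (-(θ * Complex.I)) := by
    rw [Complex.star_def, ← Complex.exp_conj]
    congr 1
    simp [Complex.conj_ofReal]
  have hstar2 : star (Complex.exp (-(θ * Complex.I))) = Complex.exp (θ * Complex.I) := by
    rw [Complex.star_def, ← Complex.exp_conj]
    congr 1
    simp [Complex.conj_ofReal]
  unfold Matrix.IsHermitian
  rw [conjTranspose_add, conjTranspose_smul, conjTranspose_smul, conjTranspose_conjTranspose,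
    hstar, hstar2]
  exact add_comm _ _

lemma Htheta_trace (A P : Matrix (Fin n) (Fin n) ℂ) (hP2 : Pᴴ = P) (θ : ℝ) :
    ((Complex.exp (θ * Complex.I) • A + Complex.exp (-(θ * Complex.I)) • Aᴴ) * P).trace
      = 2 * (Complex.exp (θ * Complex.I) * (A * P).trace).re := by
  have hAH : (Aᴴ * P).trace = star ((A * P).trace) := by
    rw [← trace_conjTranspose, conjTranspose_mul, hP2, trace_mul_comm]
  have hstar : Complex.exp (-(θ * Complex.I)) = star (Complex.exp (θ * Complex.I)) := by
    rw [Complex.star_def, ← Complex.exp_conj]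
    congr 1
    simp [Complex.conj_ofReal]
  rw [Matrix.add_mul, trace_add, Matrix.smul_mul, Matrix.smul_mul, trace_smul, trace_smul,
    hAH, hstar, smul_eq_mul, smul_eq_mul, ← star_mul']
  rw [show star (Complex.exp (↑θ * Complex.I) * (A * P).trace)
      = (starRingEnd ℂ) (Complex.exp (↑θ * Complex.I) * (A * P).trace) from rfl]
  rw [Complex.add_conj]
  push_cast
  ring

lemma wk_set_bdd (A : Matrix (Fin n) (Fin n) ℂ) (k : ℕ) :
    ∀ r ∈ {r : ℝ | ∃ P : Matrix (Fin n) (Fin n) ℂ, IsProjOfRank P k ∧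
      r = ‖(A * P).trace‖}, r ≤ ∑ i, ∑ j, ‖A i j‖ := by
  rintro r ⟨P, ⟨hP1, hP2, _⟩, rfl⟩
  calc ‖(A * P).trace‖
      ≤ ∑ i, ‖(A * P) i i‖ := by
        rw [Matrix.trace]
        exact norm_sum_le _ _
    _ ≤ ∑ i, ∑ j, ‖A i j‖ := by
        refine Finset.sum_le_sum fun i _ => ?_
        rw [mul_apply]
        calc ‖∑ j, A i j * P j i‖ ≤ ∑ j, ‖A i j * P j i‖ :=
              norm_sum_le _ _
          _ ≤ ∑ j, ‖A i j‖ := by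
              refine Finset.sum_le_sum fun j _ => ?_
              rw [norm_mul]
              calc ‖A i j‖ * ‖P j i‖
                  ≤ ‖A i j‖ * 1 :=
                    mul_le_mul_of_nonneg_left (proj_entry_abs_le_one P hP1 hP2 j i)
                      (norm_nonneg _)
                _ = ‖A i j‖ := mul_one _

lemma wk_set_nonempty (A : Matrix (Fin n) (Fin n) ℂ) (k : ℕ) (hkn : k ≤ n) :
    {r : ℝ | ∃ P : Matrix (Fin n) (Fin n) ℂ, IsProjOfRank P k ∧
      r = ‖(A * P).trace‖}.Nonempty := by
  obtain ⟨s, _, hs⟩ := Finset.exists_subset_card_eq (s := (Finset.univ : Finset (Fin n))) (n := k)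
    (by simpa using hkn)
  set D : Matrix (Fin n) (Fin n) ℂ := diagonal (fun i => if i ∈ s then (1:ℂ) else 0) with hD
  have h1 : D * D = D := by
    rw [hD, diagonal_mul_diagonal]
    refine congrArg diagonal (funext fun i => ?_)
    by_cases hi : i ∈ s <;> simp [hi]
  have h2 : Dᴴ = D := by
    rw [hD, diagonal_conjTranspose]
    refine congrArg diagonal (funext fun i => ?_)
    by_cases hi : i ∈ s <;> simp [Pi.star_apply, hi]
  have h3 : D.rank = k := by
    rw [hD, rank_diagonal, ← hs, Fintype.card_subtype]
    congr 1
    ext i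
    simp only [Finset.mem_filter, Finset.mem_univ, true_and]
    by_cases hi : i ∈ s <;> simp [hi]
  exact ⟨_, ⟨D, ⟨h1, h2, h3⟩, rfl⟩⟩

lemma projSet_compact (k : ℕ) :
    IsCompact {P : Matrix (Fin n) (Fin n) ℂ | IsProjOfRank P k} := by
  have hKeq : {P : Matrix (Fin n) (Fin n) ℂ | IsProjOfRank P k}
      = {P : Matrix (Fin n) (Fin n) ℂ | P * P = P ∧ Pᴴ = P ∧ P.trace = (k : ℂ)} := by
    ext P
    simp only [Set.mem_setOf_eq, IsProjOfRank]
    constructor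
    · rintro ⟨h1, h2, h3⟩
      exact ⟨h1, h2, by rw [trace_proj P h1 h2, h3]⟩
    · rintro ⟨h1, h2, h3⟩
      refine ⟨h1, h2, ?_⟩
      have := trace_proj P h1 h2
      rw [h3] at this
      exact_mod_cast this.symm
  rw [hKeq]
  have hclosed : IsClosed {P : Matrix (Fin n) (Fin n) ℂ | P * P = P ∧ Pᴴ = P ∧ P.trace = (k:ℂ)} := by
    refine IsClosed.inter ?_ (IsClosed.inter ?_ ?_)
    · exact isClosed_eq (continuous_id.matrix_mul continuous_id) continuous_id
    · exact isClosed_eq (continuous_id.matrix_conjTranspose) continuous_id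
    · exact isClosed_eq (continuous_id.matrix_trace) continuous_const
  have hsub : {P : Matrix (Fin n) (Fin n) ℂ | P * P = P ∧ Pᴴ = P ∧ P.trace = (k:ℂ)}
      ⊆ Set.pi Set.univ (fun _ : Fin n => Set.pi Set.univ
          (fun _ : Fin n => Metric.closedBall (0:ℂ) 1)) := by
    rintro P ⟨h1, h2, _⟩ i _ j _
    simp only [Metric.mem_closedBall, dist_zero_right]
    exact proj_entry_abs_le_one P h1 h2 i j
  have hcomp : IsCompact (Set.pi Set.univ (fun _ : Fin n => Set.pi Set.univ
      (fun _ : Fin n => Metric.closedBall (0:ℂ) 1))) :=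
    isCompact_univ_pi fun _ => isCompact_univ_pi fun _ => isCompact_closedBall _ _
  exact hcomp.of_isClosed_subset hclosed hsub

/-- `w_k(A)` is the maximum over `θ ∈ [0, 2π)` of half the sum of the `k`
largest eigenvalues of `e^{iθ} A + e^{-iθ} Aᴴ`. -/
theorem stmt_0 (n k : ℕ) (hk : 1 ≤ k) (hkn : k ≤ n) (A : Matrix (Fin n) (Fin n) ℂ) :
    IsGreatest
      {r : ℝ | ∃ θ : ℝ, θ ∈ Set.Ico 0 (2 * Real.pi) ∧
        r = sumKLargest k
              (Complex.exp (θ * Complex.I) • A + Complex.exp (-(θ * Complex.I)) • Aᴴ) / 2}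
      (wk k A) := by
  classical
  have hn : 1 ≤ n := le_trans hk hkn
  set wkset := {r : ℝ | ∃ P : Matrix (Fin n) (Fin n) ℂ, IsProjOfRank P k ∧
      r = ‖(A * P).trace‖} with hwkset
  have hbdd : BddAbove wkset := ⟨∑ i, ∑ j, ‖A i j‖, fun r hr => wk_set_bdd A k r hr⟩
  have hne : wkset.Nonempty := wk_set_nonempty A k hkn
  -- upper bound: every value in the set is at most wk k A
  have hub : ∀ θ : ℝ, sumKLargest k
      (Complex.exp (θ * Complex.I) • A + Complex.exp (-(θ * Complex.I)) • Aᴴ) / 2 ≤ wk k A := by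
    intro θ
    have hH := Htheta_herm A θ
    obtain ⟨P, hP, htr⟩ := kyfan_ex _ hH k hkn
    have h2 := Htheta_trace A P hP.2.1 θ
    rw [htr] at h2
    have h3 : sumKLargest k
        (Complex.exp (θ * Complex.I) • A + Complex.exp (-(θ * Complex.I)) • Aᴴ)
        = 2 * (Complex.exp (θ * Complex.I) * (A * P).trace).re := by exact_mod_cast h2
    have h4 : (Complex.exp (θ * Complex.I) * (A * P).trace).re
        ≤ ‖(A * P).trace‖ := by
      calc (Complex.exp (θ * Complex.I) * (A * P).trace).re
          ≤ ‖Complex.exp (θ * Complex.I) * (A * P).trace‖ := Complex.re_le_norm _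
        _ = ‖(A * P).trace‖ := by
            rw [norm_mul, Complex.norm_exp_ofReal_mul_I, one_mul]
    have h5 : ‖(A * P).trace‖ ≤ wk k A :=
      le_csSup hbdd ⟨P, hP, rfl⟩
    rw [h3]
    linarith
  -- the supremum is attained at some projection P₀
  have hKcomp := projSet_compact (n := n) k
  have hKne : {P : Matrix (Fin n) (Fin n) ℂ | IsProjOfRank P k}.Nonempty := by
    obtain ⟨r, P, hP, _⟩ := hne
    exact ⟨P, hP⟩
  have hgcont : Continuous fun P : Matrix (Fin n) (Fin n) ℂ => ‖(A * P).trace‖ :=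
    continuous_norm.comp ((continuous_const.matrix_mul continuous_id).matrix_trace)
  obtain ⟨P₀, hP₀, hmax'⟩ := hKcomp.exists_isMaxOn hKne hgcont.continuousOn
  have hmax : ∀ P, IsProjOfRank P k →
      ‖(A * P).trace‖ ≤ ‖(A * P₀).trace‖ :=
    fun P hP => hmax' hP
  have hwk : wk k A = ‖(A * P₀).trace‖ := by
    refine le_antisymm (csSup_le hne ?_) (le_csSup hbdd ⟨P₀, hP₀, rfl⟩)
    rintro r ⟨P, hP, rfl⟩
    exact hmax P hP
  -- choose the optimal angle
  set z := (A * P₀).trace with hz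
  set a := z.arg with ha
  have haIoc := Complex.arg_mem_Ioc z
  set θ₀ := if a ≤ 0 then -a else 2 * Real.pi - a with hθ₀
  have hpi := Real.pi_pos
  have hθ₀mem : θ₀ ∈ Set.Ico 0 (2 * Real.pi) := by
    rw [hθ₀]
    rcases le_or_gt a 0 with h | h
    · rw [if_pos h]
      constructor
      · linarith
      · have := haIoc.1
        linarith
    · rw [if_neg (not_le.mpr h)]
      constructor
      · have := haIoc.2
        linarith
      · linarith
  have hexpeq : Complex.exp (θ₀ * Complex.I) = Complex.exp (-(a : ℂ) * Complex.I) := by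
    rw [hθ₀]
    rcases le_or_gt a 0 with h | h
    · rw [if_pos h]
      push_cast
      ring_nf
    · rw [if_neg (not_le.mpr h)]
      have : ((2 * Real.pi - a : ℝ) : ℂ) * Complex.I
          = 2 * Real.pi * Complex.I + (-(a : ℂ)) * Complex.I := by push_cast; ring
      rw [this, Complex.exp_add, Complex.exp_two_pi_mul_I, one_mul]
  have hexpz : Complex.exp (θ₀ * Complex.I) * z = (‖z‖ : ℂ) := by
    rw [hexpeq]
    conv_lhs => rw [← Complex.norm_mul_exp_arg_mul_I z]
    rw [← ha, ← mul_assoc, mul_comm (Complex.exp (-(a:ℂ) * Complex.I)), mul_assoc,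
      ← Complex.exp_add]
    ring_nf
    rw [Complex.exp_zero, mul_one]
  -- wk k A ≤ value at θ₀
  have hH₀ := Htheta_herm A θ₀
  have hle := kyfan_le _ P₀ hH₀ k hk hkn hP₀
  have htr₀ := Htheta_trace A P₀ hP₀.2.1 θ₀
  have hre : ((Complex.exp (θ₀ * Complex.I) • A + Complex.exp (-(θ₀ * Complex.I)) • Aᴴ)
      * P₀).trace.re = 2 * ‖z‖ := by
    rw [htr₀, ← hz, hexpz]
    simp
  rw [hre] at hle
  have hge : wk k A ≤ sumKLargest k
      (Complex.exp (θ₀ * Complex.I) • A + Complex.exp (-(θ₀ * Complex.I)) • Aᴴ) / 2 := by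
    rw [hwk]
    linarith
  have heq : wk k A = sumKLargest k
      (Complex.exp (θ₀ * Complex.I) • A + Complex.exp (-(θ₀ * Complex.I)) • Aᴴ) / 2 :=
    le_antisymm hge (hub θ₀)
  constructor
  · exact ⟨θ₀, hθ₀mem, heq⟩
  · rintro r ⟨θ, hθmem, rfl⟩
    exact hub θ
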